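/- Let v, a ∈ ℝ⁴ with η_{μν}v^μv^ν = 1, η_{μν}a^μv^ν = 0, and set a² := −η_{μν}a^μa^ν. Let b, m, n be real numbers and set D := (1+b)(1 − m a²) + n² a², assumed nonzero. Then the general dragged metric ĝ^{μν} := η^{μν} + b v^μ v^ν + m a^μ a^ν + n (a^μ v^ν + a^ν v^μ) has as its matrix inverse ĝ_{μν} = η_{μν} + B v_μ v_ν + M a_μ a_ν + N (a_μ v_ν + a_ν v_μ), where B = −[ b(1 − m a²) + n² a² ]/D, M = [ n² − m(1+b) ]/D, and N = −n/D. -/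

import Mathlib

open scoped BigOperators

noncomputable section

/-- The Minkowski metric η = diag(1,-1,-1,-1) (same components for η_{μν} and η^{μν}). -/
def η (μ ν : Fin 4) : ℝ := if μ = ν then (if μ = 0 then 1 else -1) else 0

lemma ηsymm (μ ν : Fin 4) : η μ ν = η ν μ := by
  rcases eq_or_ne μ ν with h | h
  · subst h; rfl
  · simp [η, h, h.symm]

lemma ηδ (μ ν : Fin 4) : ∑ α, η μ α * η α ν = if μ = ν then (1 : ℝ) else 0 := by
  have h1 : ∑ α, η μ α * η α ν = η μ μ * η μ ν := by
    refine Finset.sum_eq_single μ (fun α _ hα => ?_)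
      (fun h => absurd (Finset.mem_univ μ) h)
    have hz : η μ α = 0 := by simp [η, Ne.symm hα]
    rw [hz, zero_mul]
  rw [h1]
  rcases eq_or_ne μ ν with h | h
  · subst h
    by_cases h0 : μ = 0 <;> simp [η, h0]
  · simp [η, h]

theorem general_dragged_metric_inverse
    (v a : Fin 4 → ℝ) (b m n a2 D B M N : ℝ)
    (hvn : ∑ μ, ∑ ν, η μ ν * v μ * v ν = 1)
    (hav : ∑ μ, ∑ ν, η μ ν * a μ * v ν = 0)
    (ha2 : a2 = -∑ μ, ∑ ν, η μ ν * a μ * a ν)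
    (hD : D = (1 + b) * (1 - m * a2) + n ^ 2 * a2)
    (hD0 : D ≠ 0)
    (vlow alow : Fin 4 → ℝ)
    (hvlow : ∀ μ, vlow μ = ∑ ν, η μ ν * v ν)
    (halow : ∀ μ, alow μ = ∑ ν, η μ ν * a ν)
    (hB : B = -(b * (1 - m * a2) + n ^ 2 * a2) / D)
    (hM : M = (n ^ 2 - m * (1 + b)) / D)
    (hN : N = -n / D)
    (gup gdown : Fin 4 → Fin 4 → ℝ)
    (hgup : ∀ μ ν, gup μ ν =
      η μ ν + b * v μ * v ν + m * a μ * a ν + n * (a μ * v ν + a ν * v μ))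
    (hgdown : ∀ μ ν, gdown μ ν =
      η μ ν + B * vlow μ * vlow ν + M * alow μ * alow ν
        + N * (alow μ * vlow ν + alow ν * vlow μ)) :
    ∀ μ ν, ∑ α, gup μ α * gdown α ν = if μ = ν then (1 : ℝ) else 0 := by
  -- raising lemmas
  have hηvl : ∀ μ, ∑ α, η μ α * vlow α = v μ := by
    intro μ
    have h1 : ∑ α, η μ α * vlow α = ∑ β, (∑ α, η μ α * η α β) * v β := by
      simp only [hvlow, Finset.mul_sum, Finset.sum_mul]
      rw [Finset.sum_comm]
      exact Finset.sum_congr rfl fun β _ => Finset.sum_congr rfl fun α _ => by ring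
    rw [h1]
    simp [ηδ]
  have hηal : ∀ μ, ∑ α, η μ α * alow α = a μ := by
    intro μ
    have h1 : ∑ α, η μ α * alow α = ∑ β, (∑ α, η μ α * η α β) * a β := by
      simp only [halow, Finset.mul_sum, Finset.sum_mul]
      rw [Finset.sum_comm]
      exact Finset.sum_congr rfl fun β _ => Finset.sum_congr rfl fun α _ => by ring
    rw [h1]
    simp [ηδ]
  -- lowering lemmas (right contraction with η)
  have hvη : ∀ ν, ∑ α, v α * η α ν = vlow ν := by
    intro ν
    rw [hvlow]
    exact Finset.sum_congr rfl fun α _ => by rw [ηsymm]; ring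
  have haη : ∀ ν, ∑ α, a α * η α ν = alow ν := by
    intro ν
    rw [halow]
    exact Finset.sum_congr rfl fun α _ => by rw [ηsymm]; ring
  -- scalar contractions
  have hvv : ∑ α, v α * vlow α = 1 := by
    have h1 : ∑ α, v α * vlow α = ∑ μ, ∑ ν, η μ ν * v μ * v ν := by
      simp only [hvlow, Finset.mul_sum]
      exact Finset.sum_congr rfl fun μ _ => Finset.sum_congr rfl fun ν _ => by ring
    rw [h1, hvn]
  have hav' : ∑ α, a α * vlow α = 0 := by
    have h1 : ∑ α, a α * vlow α = ∑ μ, ∑ ν, η μ ν * a μ * v ν := by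
      simp only [hvlow, Finset.mul_sum]
      exact Finset.sum_congr rfl fun μ _ => Finset.sum_congr rfl fun ν _ => by ring
    rw [h1, hav]
  have hva : ∑ α, v α * alow α = 0 := by
    have h1 : ∑ α, v α * alow α = ∑ μ, ∑ ν, η μ ν * a μ * v ν := by
      simp only [halow, Finset.mul_sum]
      rw [Finset.sum_comm]
      exact Finset.sum_congr rfl fun μ _ => Finset.sum_congr rfl fun ν _ => by
        rw [ηsymm]; ring
    rw [h1, hav]
  have haa : ∑ α, a α * alow α = -a2 := by
    have h1 : ∑ α, a α * alow α = ∑ μ, ∑ ν, η μ ν * a μ * a ν := by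
      simp only [halow, Finset.mul_sum]
      exact Finset.sum_congr rfl fun μ _ => Finset.sum_congr rfl fun ν _ => by ring
    rw [h1, ha2]; ring
  intro μ ν
  have expand : ∀ α, gup μ α * gdown α ν =
      η μ α * η α ν
    + (B * vlow ν) * (η μ α * vlow α)
    + (M * alow ν) * (η μ α * alow α)
    + (N * vlow ν) * (η μ α * alow α)
    + (N * alow ν) * (η μ α * vlow α)
    + (b * v μ) * (v α * η α ν)
    + (b * B * v μ * vlow ν) * (v α * vlow α)
    + (b * M * v μ * alow ν) * (v α * alow α)
    + (b * N * v μ * vlow ν) * (v α * alow α)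
    + (b * N * v μ * alow ν) * (v α * vlow α)
    + (m * a μ) * (a α * η α ν)
    + (m * B * a μ * vlow ν) * (a α * vlow α)
    + (m * M * a μ * alow ν) * (a α * alow α)
    + (m * N * a μ * vlow ν) * (a α * alow α)
    + (m * N * a μ * alow ν) * (a α * vlow α)
    + (n * a μ) * (v α * η α ν)
    + (n * v μ) * (a α * η α ν)
    + (n * B * a μ * vlow ν) * (v α * vlow α)
    + (n * B * v μ * vlow ν) * (a α * vlow α)
    + (n * M * a μ * alow ν) * (v α * alow α)
    + (n * M * v μ * alow ν) * (a α * alow α)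
    + (n * N * a μ * vlow ν) * (v α * alow α)
    + (n * N * a μ * alow ν) * (v α * vlow α)
    + (n * N * v μ * vlow ν) * (a α * alow α)
    + (n * N * v μ * alow ν) * (a α * vlow α) := by
    intro α
    rw [hgup, hgdown]
    ring
  rw [Finset.sum_congr rfl fun α _ => expand α]
  simp only [Finset.sum_add_distrib, ← Finset.mul_sum]
  rw [ηδ, hηvl, hηal, hvη, haη, hvv, hav', hva, haa]
  subst hB hM hN
  field_simp
  subst hD
  ring
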